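/- Let E = {a, b, a+b} ⊆ Φ be additively stable with a, b ∈ Φ and a+b ∈ Φ. Then {a,b} is a ℤ-basis of ℤ², and the group homomorphism f : ℤ² → ℤ determined by f(a) = f(b) = 1 satisfies f⁻¹(ℕ) ∩ Φ = {a, b, a+b}. -/
import Mathlib


def Phi : Finset (ℤ × ℤ) := {(1,0),(0,1),(1,-1),(0,-1),(-1,1),(-1,0)}

def addStable (E : Finset (ℤ × ℤ)) : Prop :=
  (AddSubmonoid.closure (E : Set (ℤ × ℤ)) : Set (ℤ × ℤ)) ∩ (Phi : Set (ℤ × ℤ)) = (E : Set (ℤ × ℤ))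

def fhom (c1 c2 : ℤ) : (ℤ × ℤ) →+ ℤ where
  toFun v := c1 * v.1 + c2 * v.2
  map_zero' := by simp
  map_add' x y := by simp [Prod.fst_add, Prod.snd_add]; ring

lemma rep (a b : ℤ × ℤ) (d : ℤ) (hd : d * (a.1 * b.2 - a.2 * b.1) = 1) :
    ∀ v : ℤ × ℤ, ∃! p : ℤ × ℤ, v = p.1 • a + p.2 • b := by
  intro v
  refine ⟨(d * (v.1 * b.2 - v.2 * b.1), d * (a.1 * v.2 - a.2 * v.1)), ?_, ?_⟩
  · simp only [Prod.ext_iff, Prod.fst_add, Prod.snd_add, Prod.smul_fst, Prod.smul_snd,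
      smul_eq_mul]
    constructor
    · linear_combination -v.1 * hd
    · linear_combination -v.2 * hd
  · rintro ⟨x, y⟩ hq
    simp only [Prod.ext_iff, Prod.fst_add, Prod.snd_add, Prod.smul_fst, Prod.smul_snd,
      smul_eq_mul] at hq ⊢
    obtain ⟨h1, h2⟩ := hq
    constructor
    · linear_combination -x * hd - d * b.2 * h1 + d * b.1 * h2
    · linear_combination -y * hd + d * a.2 * h1 - d * a.1 * h2

theorem stmt_13 (a b : ℤ × ℤ) (ha : a ∈ Phi) (hb : b ∈ Phi) (hab : a + b ∈ Phi)
    (hE : addStable {a, b, a + b}) :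
    (∀ v : ℤ × ℤ, ∃! p : ℤ × ℤ, v = p.1 • a + p.2 • b) ∧
    ∃ f : (ℤ × ℤ) →+ ℤ, f a = 1 ∧ f b = 1 ∧
      Phi.filter (fun v => 0 ≤ f v) = ({a, b, a + b} : Finset (ℤ × ℤ)) := by
  fin_cases ha <;> fin_cases hb
  · exact absurd hab (by decide)
  · exact absurd hab (by decide)
  · exact absurd hab (by decide)
  · exact ⟨rep _ _ (-1) (by norm_num), fhom (1) (-1), by decide, by decide, by decide⟩
  · exact ⟨rep _ _ (1) (by norm_num), fhom (1) (2), by decide, by decide, by decide⟩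
  · exact absurd hab (by decide)
  · exact absurd hab (by decide)
  · exact absurd hab (by decide)
  · exact ⟨rep _ _ (-1) (by norm_num), fhom (2) (1), by decide, by decide, by decide⟩
  · exact absurd hab (by decide)
  · exact absurd hab (by decide)
  · exact ⟨rep _ _ (1) (by norm_num), fhom (-1) (1), by decide, by decide, by decide⟩
  · exact absurd hab (by decide)
  · exact ⟨rep _ _ (1) (by norm_num), fhom (2) (1), by decide, by decide, by decide⟩
  · exact absurd hab (by decide)
  · exact absurd hab (by decide)
  · exact absurd hab (by decide)
  · exact ⟨rep _ _ (-1) (by norm_num), fhom (-1) (-2), by decide, by decide, by decide⟩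
  · exact ⟨rep _ _ (1) (by norm_num), fhom (1) (-1), by decide, by decide, by decide⟩
  · exact absurd hab (by decide)
  · exact absurd hab (by decide)
  · exact absurd hab (by decide)
  · exact ⟨rep _ _ (-1) (by norm_num), fhom (-2) (-1), by decide, by decide, by decide⟩
  · exact absurd hab (by decide)
  · exact ⟨rep _ _ (-1) (by norm_num), fhom (1) (2), by decide, by decide, by decide⟩
  · exact absurd hab (by decide)
  · exact absurd hab (by decide)
  · exact ⟨rep _ _ (1) (by norm_num), fhom (-2) (-1), by decide, by decide, by decide⟩
  · exact absurd hab (by decide)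
  · exact absurd hab (by decide)
  · exact absurd hab (by decide)
  · exact ⟨rep _ _ (-1) (by norm_num), fhom (-1) (1), by decide, by decide, by decide⟩
  · exact ⟨rep _ _ (1) (by norm_num), fhom (-1) (-2), by decide, by decide, by decide⟩
  · exact absurd hab (by decide)
  · exact absurd hab (by decide)
  · exact absurd hab (by decide)
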